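/- arXiv:0711.0198 — 5 statements merged into one kernel-verified Lean document; each statement's English description precedes it below -/
import Mathlib

section
/- Let C be a symmetric positive definite 2×2 matrix with entries c11, c12, c22, let μ = (μ1, μ2) ∈ ℝ², q > 0, and let E = {z : (z−μ)ᵀC⁻¹(z−μ) ≤ q²}. For any r ∈ ℝ, the line L_r = {(x, rx) : x ∈ ℝ} intersects E if and only if (μ2 − r·μ1)² ≤ q²·(c22 − 2·r·c12 + r²·c11). -/
open Matrix

lemma stmt_2_aux (c11 c12 c22 μ1 μ2 q r t : ℝ)
    (hS : 0 < r^2*c11 - 2*r*c12 + c22) (hd : 0 < c11*c22 - c12*c12)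
    (ht : t * (r^2*c11 - 2*r*c12 + c22) = c22*μ1 - c12*(μ2 + r*μ1) + c11*r*μ2)
    (h : (μ2 - r*μ1)^2 ≤ q^2*(c22 - 2*r*c12 + r^2*c11)) :
    c22*(t-μ1)^2 - 2*c12*(t-μ1)*(r*t-μ2) + c11*(r*t-μ2)^2 ≤ q^2*(c11*c22 - c12*c12) := by
  have key : (r^2*c11 - 2*r*c12 + c22) *
      (c22*(t-μ1)^2 - 2*c12*(t-μ1)*(r*t-μ2) + c11*(r*t-μ2)^2)
      = (c11*c22 - c12*c12) * (μ2 - r*μ1)^2 := by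
    linear_combination ((r^2*c11 - 2*r*c12 + c22)*t
      - (c22*μ1 - c12*(μ2 + r*μ1) + c11*r*μ2)) * ht
  have h2 : (r^2*c11 - 2*r*c12 + c22) *
      (c22*(t-μ1)^2 - 2*c12*(t-μ1)*(r*t-μ2) + c11*(r*t-μ2)^2)
      ≤ (r^2*c11 - 2*r*c12 + c22) * (q^2*(c11*c22 - c12*c12)) := by
    nlinarith [key, mul_le_mul_of_nonneg_left h hd.le]
  exact le_of_mul_le_mul_left h2 hS

/-- The line `L_r = {(x, rx)}` through the origin of slope `r` intersects the
filled covariance ellipse `E(C, μ, q)` if and only if Fieller's inequality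
`(μ2 - r·μ1)² ≤ q²·(c22 - 2·r·c12 + r²·c11)` holds. -/
theorem stmt_2 (c11 c12 c22 μ1 μ2 q r : ℝ) (hq : 0 < q)
    (hC : (!![c11, c12; c12, c22] : Matrix (Fin 2) (Fin 2) ℝ).PosDef) :
    (∃ x : ℝ, (![x, r * x] - ![μ1, μ2]) ⬝ᵥ
        ((!![c11, c12; c12, c22] : Matrix (Fin 2) (Fin 2) ℝ)⁻¹ *ᵥ
          (![x, r * x] - ![μ1, μ2])) ≤ q ^ 2)
      ↔ (μ2 - r * μ1) ^ 2 ≤ q ^ 2 * (c22 - 2 * r * c12 + r ^ 2 * c11) := by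
  have hd : (0:ℝ) < c11*c22 - c12*c12 := by
    have := hC.det_pos; rwa [Matrix.det_fin_two_of] at this
  have hS : (0:ℝ) < r^2*c11 - 2*r*c12 + c22 := by
    have h1 := hC.dotProduct_mulVec_pos (x := ![r, -1]) (by intro h; have := congrFun h 1; simp at this)
    have h2 : (0:ℝ) < r * (c11 * r + -c12) + (c22 + -(c12 * r)) := by
      simpa [Matrix.mulVec, dotProduct, Fin.sum_univ_two] using h1
    nlinarith [h2]
  have hexp : ∀ x : ℝ, (![x, r * x] - ![μ1, μ2]) ⬝ᵥ
        ((!![c11, c12; c12, c22] : Matrix (Fin 2) (Fin 2) ℝ)⁻¹ *ᵥ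
          (![x, r * x] - ![μ1, μ2]))
      = (c22*(x-μ1)^2 - 2*c12*(x-μ1)*(r*x-μ2) + c11*(r*x-μ2)^2) / (c11*c22 - c12*c12) := by
    intro x
    have hinv : (!![c11, c12; c12, c22] : Matrix (Fin 2) (Fin 2) ℝ)⁻¹
        = (c11*c22 - c12*c12)⁻¹ • !![c22, -c12; -c12, c11] := by
      rw [Matrix.inv_def, Matrix.adjugate_fin_two_of, Matrix.det_fin_two_of,
        Ring.inverse_eq_inv']
    rw [hinv]
    simp [Matrix.smul_mulVec, Matrix.mulVec, dotProduct, Fin.sum_univ_two]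
    field_simp
    ring
  constructor
  · rintro ⟨x, hx⟩
    rw [hexp x, div_le_iff₀ hd] at hx
    nlinarith [sq_nonneg ((r^2*c11 - 2*r*c12 + c22)*x
        - (c22*μ1 - c12*(μ2 + r*μ1) + c11*r*μ2)), hd, hS, mul_pos hd hS]
  · intro h
    refine ⟨(c22*μ1 - c12*(μ2 + r*μ1) + c11*r*μ2) / (r^2*c11 - 2*r*c12 + c22), ?_⟩
    rw [hexp, div_le_iff₀ hd]
    exact stmt_2_aux c11 c12 c22 μ1 μ2 q r _ hS hd
      (div_mul_cancel₀ _ hS.ne') h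
end

section
/- Let C be a symmetric positive definite 2×2 matrix with entries c11, c12, c22 and μ = (μ1, μ2) ∈ ℝ², q > 0. If μᵀC⁻¹μ ≤ q² (i.e., the origin lies in the filled ellipse E(C,μ,q)), then for every r ∈ ℝ we have (μ2 − r·μ1)² ≤ q²·(c22 − 2·r·c12 + r²·c11). -/
open Matrix

/-- Completely unbounded case: if the origin lies in the filled ellipse
`E(C, μ, q)`, i.e. `μᵀC⁻¹μ ≤ q²`, then every slope `r` satisfies Fieller's
inequality. -/
theorem stmt_3 (c11 c12 c22 μ1 μ2 q : ℝ) (hq : 0 < q)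
    (hC : (!![c11, c12; c12, c22] : Matrix (Fin 2) (Fin 2) ℝ).PosDef)
    (h0 : ![μ1, μ2] ⬝ᵥ
        ((!![c11, c12; c12, c22] : Matrix (Fin 2) (Fin 2) ℝ)⁻¹ *ᵥ ![μ1, μ2]) ≤ q ^ 2) :
    ∀ r : ℝ, (μ2 - r * μ1) ^ 2 ≤ q ^ 2 * (c22 - 2 * r * c12 + r ^ 2 * c11) := by
  intro r
  have hdet : 0 < c11 * c22 - c12 * c12 := by
    have := hC.det_pos
    simpa [Matrix.det_fin_two_of] using this
  have hQ : 0 ≤ c22 - 2 * r * c12 + r ^ 2 * c11 := by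
    have := hC.dotProduct_mulVec_pos (x := ![-r, 1]) (fun h => by simpa using congrFun h 1)
    have h := this.le
    simp only [Matrix.mulVec, dotProduct, Fin.sum_univ_two, Matrix.of_apply, Pi.star_apply,
      star_trivial, Matrix.cons_val', Matrix.cons_val_zero, Matrix.cons_val_one,
      Matrix.head_cons, Matrix.empty_val', Matrix.cons_val_fin_one, Matrix.head_fin_const] at h
    nlinarith [h]
  have h0' : c22 * μ1 ^ 2 - 2 * c12 * μ1 * μ2 + c11 * μ2 ^ 2 ≤
      q ^ 2 * (c11 * c22 - c12 * c12) := by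
    have hne : (c11 * c22 - c12 * c12) ≠ 0 := ne_of_gt hdet
    rw [Matrix.inv_def, Matrix.adjugate_fin_two_of, Matrix.det_fin_two_of] at h0
    simp only [Matrix.mulVec, dotProduct, Fin.sum_univ_two, Matrix.of_apply, Matrix.smul_apply,
      smul_eq_mul, Matrix.cons_val', Matrix.cons_val_zero, Matrix.cons_val_one,
      Matrix.head_cons, Matrix.empty_val', Matrix.cons_val_fin_one, Matrix.head_fin_const,
      Ring.inverse_eq_inv'] at h0
    have h0'' := mul_le_mul_of_nonneg_left h0 hdet.le
    have key : (c11 * c22 - c12 * c12) *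
        (μ1 * ((c11 * c22 - c12 * c12)⁻¹ * c22 * μ1 + (c11 * c22 - c12 * c12)⁻¹ * -c12 * μ2) +
         μ2 * ((c11 * c22 - c12 * c12)⁻¹ * -c12 * μ1 + (c11 * c22 - c12 * c12)⁻¹ * c11 * μ2)) =
        c22 * μ1 ^ 2 - 2 * c12 * μ1 * μ2 + c11 * μ2 ^ 2 := by
      linear_combination (c22 * μ1 ^ 2 - 2 * c12 * μ1 * μ2 + c11 * μ2 ^ 2) * mul_inv_cancel₀ hne
    nlinarith [h0'', key]
  have key2 : (c11 * c22 - c12 * c12) * ((μ2 - r * μ1) ^ 2) ≤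
      (c11 * c22 - c12 * c12) * (q ^ 2 * (c22 - 2 * r * c12 + r ^ 2 * c11)) := by
    nlinarith [mul_le_mul_of_nonneg_left h0' hQ,
      sq_nonneg (r * (c12 * μ1 - c11 * μ2) - (c22 * μ1 - c12 * μ2))]
  exact le_of_mul_le_mul_left key2 hdet
end

section
/- Let C, μ, q be as above with c11, c12, c22 the entries of C. If μ1² > q²·c11, then the set {r ∈ ℝ : (μ2 − r·μ1)² ≤ q²·(c22 − 2·r·c12 + r²·c11)} equals the closed interval [min(l1,l2), max(l1,l2)], where l1,2 = ((μ1μ2 − q²c12) ± √((μ1μ2 − q²c12)² − (μ1² − q²c11)(μ2² − q²c22))) / (μ1² − q²c11); in particular the discriminant (μ1μ2 − q²c12)² − (μ1² − q²c11)(μ2² − q²c22) is nonnegative in this case. -/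
set_option maxHeartbeats 800000


open Matrix

/-- Bounded case of Fieller's theorem: if `μ1² > q²·c11`, the discriminant of
Fieller's quadratic is nonnegative and the solution set of Fieller's inequality
is the closed interval `[min(l1,l2), max(l1,l2)]`. -/
theorem stmt_4 (c11 c12 c22 μ1 μ2 q : ℝ) (hq : 0 < q)
    (hC : (!![c11, c12; c12, c22] : Matrix (Fin 2) (Fin 2) ℝ).PosDef)
    (hb : μ1 ^ 2 > q ^ 2 * c11) :
    0 ≤ (μ1 * μ2 - q ^ 2 * c12) ^ 2 - (μ1 ^ 2 - q ^ 2 * c11) * (μ2 ^ 2 - q ^ 2 * c22) ∧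
    {r : ℝ | (μ2 - r * μ1) ^ 2 ≤ q ^ 2 * (c22 - 2 * r * c12 + r ^ 2 * c11)}
      = Set.Icc
        (min
          (((μ1 * μ2 - q ^ 2 * c12) +
              Real.sqrt ((μ1 * μ2 - q ^ 2 * c12) ^ 2 -
                (μ1 ^ 2 - q ^ 2 * c11) * (μ2 ^ 2 - q ^ 2 * c22))) /
            (μ1 ^ 2 - q ^ 2 * c11))
          (((μ1 * μ2 - q ^ 2 * c12) -
              Real.sqrt ((μ1 * μ2 - q ^ 2 * c12) ^ 2 -
                (μ1 ^ 2 - q ^ 2 * c11) * (μ2 ^ 2 - q ^ 2 * c22))) /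
            (μ1 ^ 2 - q ^ 2 * c11)))
        (max
          (((μ1 * μ2 - q ^ 2 * c12) +
              Real.sqrt ((μ1 * μ2 - q ^ 2 * c12) ^ 2 -
                (μ1 ^ 2 - q ^ 2 * c11) * (μ2 ^ 2 - q ^ 2 * c22))) /
            (μ1 ^ 2 - q ^ 2 * c11))
          (((μ1 * μ2 - q ^ 2 * c12) -
              Real.sqrt ((μ1 * μ2 - q ^ 2 * c12) ^ 2 -
                (μ1 ^ 2 - q ^ 2 * c11) * (μ2 ^ 2 - q ^ 2 * c22))) /
            (μ1 ^ 2 - q ^ 2 * c11))) := by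
  have h11 : (0:ℝ) < c11 := by
    have h := hC.dotProduct_mulVec_pos (x := ![1, 0]) (by
      intro h
      have := congrFun h 0
      simp at this)
    simpa [Matrix.mulVec, dotProduct, Fin.sum_univ_two] using h
  have hdet : 0 < c11 * c22 - c12 * c12 := by
    have h := hC.det_pos
    rw [Matrix.det_fin_two_of] at h
    nlinarith [h]
  set b := μ1 * μ2 - q ^ 2 * c12 with hbdef
  set a := μ1 ^ 2 - q ^ 2 * c11 with hadef
  set c := μ2 ^ 2 - q ^ 2 * c22 with hcdef
  have ha0 : 0 < a := sub_pos.mpr hb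
  have hq2 : 0 < q ^ 2 := by positivity
  have hμ1 : μ1 ≠ 0 := by
    intro h
    rw [h] at hb
    nlinarith
  set d := b ^ 2 - a * c with hddef
  have hd : 0 ≤ d := by
    set r0 := μ2 / μ1 with hr0
    have hr0μ : r0 * μ1 = μ2 := div_mul_cancel₀ μ2 hμ1
    have hqpos : 0 < c22 - 2 * r0 * c12 + r0 ^ 2 * c11 := by
      nlinarith [sq_nonneg (c11 * r0 - c12)]
    have hf : a * r0 ^ 2 - 2 * b * r0 + c < 0 := by
      have hid : (μ2 - r0 * μ1) ^ 2 - q ^ 2 * (c22 - 2 * r0 * c12 + r0 ^ 2 * c11)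
          = a * r0 ^ 2 - 2 * b * r0 + c := by
        simp only [hadef, hbdef, hcdef]; ring
      rw [hr0μ] at hid
      nlinarith [mul_pos hq2 hqpos]
    nlinarith [sq_nonneg (a * r0 - b), mul_pos ha0 (neg_pos.mpr hf)]
  have hsd : Real.sqrt d ^ 2 = d := Real.sq_sqrt hd
  have hsdnn : 0 ≤ Real.sqrt d := Real.sqrt_nonneg d
  refine ⟨hd, ?_⟩
  have hmin : min ((b + Real.sqrt d) / a) ((b - Real.sqrt d) / a)
      = (b - Real.sqrt d) / a :=
    min_eq_right ((div_le_div_iff_of_pos_right ha0).mpr (by linarith))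
  have hmax : max ((b + Real.sqrt d) / a) ((b - Real.sqrt d) / a)
      = (b + Real.sqrt d) / a :=
    max_eq_left ((div_le_div_iff_of_pos_right ha0).mpr (by linarith))
  ext r
  simp only [Set.mem_setOf_eq, Set.mem_Icc, hmin, hmax,
    div_le_iff₀ ha0, le_div_iff₀ ha0]
  have hid : (μ2 - r * μ1) ^ 2 - q ^ 2 * (c22 - 2 * r * c12 + r ^ 2 * c11)
      = a * r ^ 2 - 2 * b * r + c := by
    simp only [hadef, hbdef, hcdef]; ring
  constructor
  · intro h
    have hf : a * r ^ 2 - 2 * b * r + c ≤ 0 := by rw [← hid]; linarith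
    have hsq : (a * r - b) ^ 2 ≤ Real.sqrt d ^ 2 := by
      rw [hsd, hddef]; nlinarith [mul_pos ha0 ha0]
    constructor
    · nlinarith [hsq, hsdnn, sq_nonneg (a * r - b + Real.sqrt d)]
    · nlinarith [hsq, hsdnn, sq_nonneg (a * r - b - Real.sqrt d)]
  · rintro ⟨h1, h2⟩
    have hsq : (a * r - b) ^ 2 ≤ d := by
      nlinarith [mul_nonneg (by linarith : (0:ℝ) ≤ Real.sqrt d - (a * r - b)) (by linarith : (0:ℝ) ≤ Real.sqrt d + (a * r - b))]
    have hf : a * r ^ 2 - 2 * b * r + c ≤ 0 := by nlinarith [hsq, ha0]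
    rw [← hid] at hf; linarith
end

section
/- Let C, μ, q be as above. If μ1² < q²·c11 and μᵀC⁻¹μ > q², then the set {r ∈ ℝ : (μ2 − r·μ1)² ≤ q²·(c22 − 2·r·c12 + r²·c11)} equals (−∞, min(l1,l2)] ∪ [max(l1,l2), ∞), with l1, l2 as in Fieller's formula. -/
open Matrix

/-- Exclusive unbounded case of Fieller's theorem: if `μ1² < q²·c11` and
`μᵀC⁻¹μ > q²`, the solution set of Fieller's inequality is
`(-∞, min(l1,l2)] ∪ [max(l1,l2), ∞)`. -/
theorem stmt_5 (c11 c12 c22 μ1 μ2 q : ℝ) (hq : 0 < q)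
    (hC : (!![c11, c12; c12, c22] : Matrix (Fin 2) (Fin 2) ℝ).PosDef)
    (hb : μ1 ^ 2 < q ^ 2 * c11)
    (h0 : ![μ1, μ2] ⬝ᵥ
        ((!![c11, c12; c12, c22] : Matrix (Fin 2) (Fin 2) ℝ)⁻¹ *ᵥ ![μ1, μ2]) > q ^ 2) :
    {r : ℝ | (μ2 - r * μ1) ^ 2 ≤ q ^ 2 * (c22 - 2 * r * c12 + r ^ 2 * c11)}
      = Set.Iic
          (min
            (((μ1 * μ2 - q ^ 2 * c12) +
                Real.sqrt ((μ1 * μ2 - q ^ 2 * c12) ^ 2 -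
                  (μ1 ^ 2 - q ^ 2 * c11) * (μ2 ^ 2 - q ^ 2 * c22))) /
              (μ1 ^ 2 - q ^ 2 * c11))
            (((μ1 * μ2 - q ^ 2 * c12) -
                Real.sqrt ((μ1 * μ2 - q ^ 2 * c12) ^ 2 -
                  (μ1 ^ 2 - q ^ 2 * c11) * (μ2 ^ 2 - q ^ 2 * c22))) /
              (μ1 ^ 2 - q ^ 2 * c11)))
        ∪ Set.Ici
          (max
            (((μ1 * μ2 - q ^ 2 * c12) +
                Real.sqrt ((μ1 * μ2 - q ^ 2 * c12) ^ 2 -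
                  (μ1 ^ 2 - q ^ 2 * c11) * (μ2 ^ 2 - q ^ 2 * c22))) /
              (μ1 ^ 2 - q ^ 2 * c11))
            (((μ1 * μ2 - q ^ 2 * c12) -
                Real.sqrt ((μ1 * μ2 - q ^ 2 * c12) ^ 2 -
                  (μ1 ^ 2 - q ^ 2 * c11) * (μ2 ^ 2 - q ^ 2 * c22))) /
              (μ1 ^ 2 - q ^ 2 * c11))) := by
  have hdet : 0 < c11*c22 - c12^2 := by
    have := hC.det_pos
    rw [Matrix.det_fin_two_of] at this
    nlinarith [this]
  have hkey : q^2 * (c11*c22 - c12^2) < c22*μ1^2 - 2*c12*μ1*μ2 + c11*μ2^2 := by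
    rw [Matrix.inv_def, Matrix.adjugate_fin_two_of, Matrix.det_fin_two_of] at h0
    simp [Matrix.mulVec, dotProduct, Fin.sum_univ_two, Ring.inverse_eq_inv'] at h0
    have h1 : μ1 * ((c11 * c22 - c12 * c12)⁻¹ * c22 * μ1 + -((c11 * c22 - c12 * c12)⁻¹ * c12 * μ2)) +
        μ2 * (-((c11 * c22 - c12 * c12)⁻¹ * c12 * μ1) + (c11 * c22 - c12 * c12)⁻¹ * c11 * μ2)
        = (c22*μ1^2 - 2*c12*μ1*μ2 + c11*μ2^2) / (c11*c22-c12^2) := by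
      have hne : c11*c22 - c12*c12 ≠ 0 := by nlinarith
      field_simp [hne]
      ring
    rw [h1, lt_div_iff₀ hdet] at h0
    linarith
  set a : ℝ := μ1 ^ 2 - q ^ 2 * c11 with ha_def
  set b : ℝ := μ1 * μ2 - q ^ 2 * c12 with hb_def
  set c : ℝ := μ2 ^ 2 - q ^ 2 * c22 with hc_def
  have ha : a < 0 := by simp [ha_def]; linarith
  have hane : a ≠ 0 := ne_of_lt ha
  have hdisc : 0 < b^2 - a*c := by
    have he : b^2 - a*c = q^2 * ((c22*μ1^2 - 2*c12*μ1*μ2 + c11*μ2^2) - q^2*(c11*c22 - c12^2)) := by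
      rw [ha_def, hb_def, hc_def]; ring
    rw [he]
    exact mul_pos (by positivity) (by linarith)
  set s : ℝ := Real.sqrt (b^2 - a*c) with hs_def
  have hs : s^2 = b^2 - a*c := Real.sq_sqrt hdisc.le
  have hspos : 0 < s := Real.sqrt_pos.mpr hdisc
  set l1 : ℝ := (b + s) / a with hl1_def
  set l2 : ℝ := (b - s) / a with hl2_def
  have e1 : a * l1 = b + s := by rw [hl1_def]; field_simp
  have e2 : a * l2 = b - s := by rw [hl2_def]; field_simp
  have hle : l1 ≤ l2 := by
    have hd : l2 - l1 = (-2*s)/a := by rw [hl1_def, hl2_def]; field_simp; ring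
    have : 0 ≤ (-2*s)/a := div_nonneg_of_nonpos (by linarith) ha.le
    linarith
  clear_value a b c s l1 l2
  rw [min_eq_left hle, max_eq_right hle]
  ext r
  simp only [Set.mem_setOf_eq, Set.mem_union, Set.mem_Iic, Set.mem_Ici]
  have hquad : (μ2 - r * μ1) ^ 2 - q ^ 2 * (c22 - 2 * r * c12 + r ^ 2 * c11)
      = a * r^2 - 2*b*r + c := by
    rw [ha_def, hb_def, hc_def]; ring
  constructor
  · intro h
    have h' : a * r^2 - 2*b*r + c ≤ 0 := by linarith [hquad]
    by_contra hcon
    push_neg at hcon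
    obtain ⟨h4, h5⟩ := hcon
    have h4' : a * r < b + s := by linarith [mul_lt_mul_of_neg_left h4 ha, e1]
    have h5' : b - s < a * r := by linarith [mul_lt_mul_of_neg_left h5 ha, e2]
    have p1 : 0 < (a*r - (b - s)) * ((b + s) - a*r) := mul_pos (by linarith) (by linarith)
    have p2 : 0 ≤ (-a) * (-(a * r^2 - 2*b*r + c)) := mul_nonneg (by linarith) (by linarith)
    have hid1 : (a*r - (b - s)) * ((b + s) - a*r) = -((-a) * (-(a * r^2 - 2*b*r + c))) := by
      linear_combination hs
    linarith [p1, p2, hid1]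
  · intro h
    have h' : a * r^2 - 2*b*r + c ≤ 0 := by
      rcases h with h | h
      · have h6 : b + s ≤ a * r := by linarith [mul_le_mul_of_nonpos_left h ha.le, e1]
        have p2 : 0 ≤ (a*r - (b + s)) * (a*r - (b - s)) :=
          mul_nonneg (by linarith) (by linarith)
        have hid2 : (a*r - (b + s)) * (a*r - (b - s)) = a * (a * r^2 - 2*b*r + c) := by
          linear_combination -hs
        rw [hid2] at p2
        by_contra hq0
        push_neg at hq0
        linarith [mul_neg_of_neg_of_pos ha hq0]
      · have h6 : a * r ≤ b - s := by linarith [mul_le_mul_of_nonpos_left h ha.le, e2]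
        have p2 : 0 ≤ ((b + s) - a*r) * ((b - s) - a*r) :=
          mul_nonneg (by linarith) (by linarith)
        have hid3 : ((b + s) - a*r) * ((b - s) - a*r) = a * (a * r^2 - 2*b*r + c) := by
          linear_combination -hs
        rw [hid3] at p2
        by_contra hq0
        push_neg at hq0
        linarith [mul_neg_of_neg_of_pos ha hq0]
    linarith [hquad]
end

section
/- Let C be symmetric positive definite 2×2 with entries c11, c12, c22, μ = (μ1,μ2) ∈ ℝ², q > 0, and suppose μ1² > q²·c11 and the discriminant D := (μ1μ2 − q²c12)² − (μ1² − q²c11)(μ2² − q²c22) is positive. Then the two lines through the origin tangent to the ellipse boundary {z : (z−μ)ᵀC⁻¹(z−μ) = q²} have slopes exactly l1 and l2, where l1,2 = ((μ1μ2 − q²c12) ± √D)/(μ1² − q²c11). Equivalently, for r ∈ ℝ, the line {(x, rx)} intersects the boundary ellipse in exactly one point if and only if r ∈ {l1, l2}. -/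
open Matrix

private lemma quad_unique_iff {a b c : ℝ} (ha : a ≠ 0) :
    (∃! x : ℝ, a * x ^ 2 + b * x + c = 0) ↔ discrim a b c = 0 := by
  simp only [pow_two]
  constructor
  · rintro ⟨x, hx, hu⟩
    rcases lt_trichotomy (discrim a b c) 0 with h | h | h
    · exact absurd hx (by
        apply quadratic_ne_zero_of_discrim_ne_sq
        intro s
        nlinarith [sq_nonneg s])
    · exact h
    · exfalso
      set s := Real.sqrt (discrim a b c) with hs
      have hs2 : discrim a b c = s * s := by
        rw [hs, Real.mul_self_sqrt h.le]
      have hspos : 0 < s := Real.sqrt_pos.mpr h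
      have h1 : a * (((-b + s) / (2 * a)) * ((-b + s) / (2 * a))) + b * ((-b + s) / (2 * a)) + c = 0 :=
        (quadratic_eq_zero_iff ha hs2 _).mpr (Or.inl rfl)
      have h2 : a * (((-b - s) / (2 * a)) * ((-b - s) / (2 * a))) + b * ((-b - s) / (2 * a)) + c = 0 :=
        (quadratic_eq_zero_iff ha hs2 _).mpr (Or.inr rfl)
      have := (hu _ h1).trans (hu _ h2).symm
      rw [div_eq_div_iff (by simpa using ha) (by simpa using ha)] at this
      have : s * (2 * a) = 0 := by linarith [this]
      rcases mul_eq_zero.mp this with h' | h'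
      · exact hspos.ne' h'
      · simp at h'; exact ha h'
  · intro h
    exact ⟨-b / (2 * a), (quadratic_eq_zero_iff_of_discrim_eq_zero ha h _).mpr rfl,
      fun y hy => (quadratic_eq_zero_iff_of_discrim_eq_zero ha h y).mp hy⟩

/-- Tangent slopes: if `μ1² > q²·c11` and the discriminant `D` of Fieller's
quadratic is positive, then for any `r` the line of slope `r` through the origin
meets the boundary ellipse `{z : (z-μ)ᵀC⁻¹(z-μ) = q²}` in exactly one point if
and only if `r` is one of the two roots `l1, l2` of Fieller's quadratic. -/
theorem stmt_15 (c11 c12 c22 μ1 μ2 q : ℝ) (hq : 0 < q)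
    (hC : (!![c11, c12; c12, c22] : Matrix (Fin 2) (Fin 2) ℝ).PosDef)
    (hb : μ1 ^ 2 > q ^ 2 * c11)
    (hD : 0 < (μ1 * μ2 - q ^ 2 * c12) ^ 2 - (μ1 ^ 2 - q ^ 2 * c11) * (μ2 ^ 2 - q ^ 2 * c22)) :
    ∀ r : ℝ,
      (∃! x : ℝ, (![x, r * x] - ![μ1, μ2]) ⬝ᵥ
          ((!![c11, c12; c12, c22] : Matrix (Fin 2) (Fin 2) ℝ)⁻¹ *ᵥ
            (![x, r * x] - ![μ1, μ2])) = q ^ 2)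
        ↔ r = ((μ1 * μ2 - q ^ 2 * c12) +
                Real.sqrt ((μ1 * μ2 - q ^ 2 * c12) ^ 2 -
                  (μ1 ^ 2 - q ^ 2 * c11) * (μ2 ^ 2 - q ^ 2 * c22))) /
              (μ1 ^ 2 - q ^ 2 * c11)
          ∨ r = ((μ1 * μ2 - q ^ 2 * c12) -
                Real.sqrt ((μ1 * μ2 - q ^ 2 * c12) ^ 2 -
                  (μ1 ^ 2 - q ^ 2 * c11) * (μ2 ^ 2 - q ^ 2 * c22))) /
              (μ1 ^ 2 - q ^ 2 * c11) := by
  intro r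
  set D := (μ1 * μ2 - q ^ 2 * c12) ^ 2 - (μ1 ^ 2 - q ^ 2 * c11) * (μ2 ^ 2 - q ^ 2 * c22) with hDdef
  set d := c11 * c22 - c12 ^ 2 with hd_def
  -- determinant positive
  have hdet : (!![c11, c12; c12, c22] : Matrix (Fin 2) (Fin 2) ℝ).det = d := by
    simp [Matrix.det_fin_two_of, hd_def]; ring
  have hd : 0 < d := hdet ▸ hC.det_pos
  -- c11 > 0
  have hc11 : 0 < c11 := by
    have := hC.dotProduct_mulVec_pos (x := ![1, 0]) (by
      intro h
      have := congrFun h 0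
      simp at this)
    simpa [Matrix.mulVec, dotProduct, Fin.sum_univ_two] using this
  -- explicit inverse
  have hinv : (!![c11, c12; c12, c22] : Matrix (Fin 2) (Fin 2) ℝ)⁻¹
      = d⁻¹ • !![c22, -c12; -c12, c11] := by
    rw [Matrix.inv_def, Matrix.adjugate_fin_two_of, hdet, Ring.inverse_eq_inv']
  rw [hinv]
  -- leading coefficient of the quadratic in x
  have hA : (0:ℝ) < c11 * r ^ 2 - 2 * c12 * r + c22 := by
    nlinarith [sq_nonneg (c11 * r - c12)]
  have hAne : c11 * r ^ 2 - 2 * c12 * r + c22 ≠ 0 := ne_of_gt hA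
  -- rewrite the membership condition as a quadratic equation in x
  have key : ∀ x : ℝ,
      ((![x, r * x] - ![μ1, μ2]) ⬝ᵥ
        ((d⁻¹ • !![c22, -c12; -c12, c11]) *ᵥ (![x, r * x] - ![μ1, μ2])) = q ^ 2)
      ↔ (c11 * r ^ 2 - 2 * c12 * r + c22) * x ^ 2
          + (-2 * c22 * μ1 + 2 * c12 * (μ2 + r * μ1) - 2 * c11 * r * μ2) * x
          + (c22 * μ1 ^ 2 - 2 * c12 * μ1 * μ2 + c11 * μ2 ^ 2 - q ^ 2 * d) = 0 := by
    intro x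
    have hexp : (![x, r * x] - ![μ1, μ2]) ⬝ᵥ
        ((d⁻¹ • !![c22, -c12; -c12, c11]) *ᵥ (![x, r * x] - ![μ1, μ2]))
        = d⁻¹ * (c22 * (x - μ1) ^ 2 - 2 * c12 * (x - μ1) * (r * x - μ2)
            + c11 * (r * x - μ2) ^ 2) := by
      simp [Matrix.mulVec, dotProduct, Fin.sum_univ_two]
      ring
    rw [hexp, inv_mul_eq_div, div_eq_iff hd.ne']
    constructor <;> intro h <;> linear_combination h
  rw [existsUnique_congr key, quad_unique_iff hAne]
  -- the discriminant equals -4d times Fieller's quadratic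
  have hdisc : discrim (c11 * r ^ 2 - 2 * c12 * r + c22)
      (-2 * c22 * μ1 + 2 * c12 * (μ2 + r * μ1) - 2 * c11 * r * μ2)
      (c22 * μ1 ^ 2 - 2 * c12 * μ1 * μ2 + c11 * μ2 ^ 2 - q ^ 2 * d)
      = -4 * d * ((μ1 ^ 2 - q ^ 2 * c11) * r ^ 2
          - 2 * (μ1 * μ2 - q ^ 2 * c12) * r + (μ2 ^ 2 - q ^ 2 * c22)) := by
    unfold discrim
    rw [hd_def]
    ring
  rw [hdisc]
  have ha : μ1 ^ 2 - q ^ 2 * c11 ≠ 0 := by nlinarith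
  have hs : discrim (μ1 ^ 2 - q ^ 2 * c11) (-2 * (μ1 * μ2 - q ^ 2 * c12))
      (μ2 ^ 2 - q ^ 2 * c22) = (2 * Real.sqrt D) * (2 * Real.sqrt D) := by
    unfold discrim
    have : Real.sqrt D * Real.sqrt D = D := Real.mul_self_sqrt hD.le
    rw [hDdef] at this ⊢
    nlinarith [this]
  constructor
  · intro h
    have hf : (μ1 ^ 2 - q ^ 2 * c11) * (r * r) + (-2 * (μ1 * μ2 - q ^ 2 * c12)) * r
        + (μ2 ^ 2 - q ^ 2 * c22) = 0 := by
      have h4 : (-4 : ℝ) * d ≠ 0 := by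
        intro h0
        nlinarith [hd]
      have h' := (mul_eq_zero.mp h).resolve_left h4
      linear_combination h'
    rcases (quadratic_eq_zero_iff ha hs r).mp hf with h' | h'
    · left
      rw [h']
      rw [div_eq_div_iff (by simpa using ha) ha]
      ring
    · right
      rw [h']
      rw [div_eq_div_iff (by simpa using ha) ha]
      ring
  · intro h
    have hf : (μ1 ^ 2 - q ^ 2 * c11) * (r * r) + (-2 * (μ1 * μ2 - q ^ 2 * c12)) * r
        + (μ2 ^ 2 - q ^ 2 * c22) = 0 := by
      apply (quadratic_eq_zero_iff ha hs r).mpr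
      rcases h with h | h
      · left
        rw [h, div_eq_div_iff ha (by simpa using ha)]
        ring
      · right
        rw [h, div_eq_div_iff ha (by simpa using ha)]
        ring
    have hz : (μ1 ^ 2 - q ^ 2 * c11) * r ^ 2 - 2 * (μ1 * μ2 - q ^ 2 * c12) * r
        + (μ2 ^ 2 - q ^ 2 * c22) = 0 := by linear_combination hf
    rw [hz]
    ring
end
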